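/- If s ≥ 2 and t ≥ 1, then there exist no real numbers α, γ such that A_n = ⌊nα + γ⌋ for all n ≥ 0, where A_n = mex{A_i, B_i : i < n} and B_n = s·A_n + t·n. -/

import Mathlib

set_option linter.unusedSectionVars false
set_option maxHeartbeats 1000000

open Int


lemma walk_fract (a b : ℝ) (ha : 0 ≤ a) (hb : b ≤ 1) (y₀ δ : ℝ) (hδ0 : δ ≠ 0)
    (hδ : |δ| < b - a) : ∃ m : ℕ, a < Int.fract (y₀ + m * δ) ∧ Int.fract (y₀ + m * δ) < b := by
  have hab : a < b := by
    have := abs_pos.mpr hδ0; linarith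
  rcases hδ0.lt_or_gt with hneg | hpos
  · -- δ < 0
    have habs : -δ < b - a := by rwa [abs_of_neg hneg] at hδ
    set J : ℤ := ⌊y₀⌋ - 1 with hJ
    have hJb : (J : ℝ) + b ≤ y₀ := by
      have := Int.floor_le y₀
      push_cast [hJ]; linarith
    set u : ℝ := (y₀ - ((J : ℝ) + b)) / (-δ) with hu
    have hu0 : 0 ≤ u := div_nonneg (by linarith) (by linarith)
    refine ⟨⌊u⌋₊ + 1, ?_⟩
    set m : ℕ := ⌊u⌋₊ + 1 with hm
    have h1 : (m : ℝ) * (-δ) > y₀ - ((J : ℝ) + b) := by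
      have h2 : u < ⌊u⌋₊ + 1 := Nat.lt_floor_add_one u
      have h2' : u < (m : ℝ) := by push_cast [hm]; push_cast at h2; linarith
      calc (m : ℝ) * (-δ) > u * (-δ) := mul_lt_mul_of_pos_right h2' (by linarith)
        _ = y₀ - ((J : ℝ) + b) := by rw [hu]; field_simp
    have h3 : ((m : ℝ) - 1) * (-δ) ≤ y₀ - ((J : ℝ) + b) := by
      have h4 : (⌊u⌋₊ : ℝ) ≤ u := Nat.floor_le hu0
      have h5 : ((m : ℝ) - 1) = (⌊u⌋₊ : ℝ) := by push_cast [hm]; ring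
      rw [h5]
      calc (⌊u⌋₊ : ℝ) * (-δ) ≤ u * (-δ) := mul_le_mul_of_nonneg_right h4 (by linarith)
        _ = y₀ - ((J : ℝ) + b) := by rw [hu]; field_simp
    set x : ℝ := y₀ + m * δ with hx
    have hx1 : x < (J : ℝ) + b := by nlinarith [h1]
    have hx2 : (J : ℝ) + a < x := by nlinarith [h3]
    have hfl : ⌊x⌋ = J := Int.floor_eq_iff.mpr ⟨by linarith, by linarith⟩
    have hfr : Int.fract x = x - (J : ℝ) := by rw [Int.fract, hfl]
    exact ⟨by rw [hfr]; linarith, by rw [hfr]; linarith⟩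
  · -- δ > 0
    have habs : δ < b - a := by rwa [abs_of_pos hpos] at hδ
    set J : ℤ := ⌊y₀⌋ + 1 with hJ
    have hJb : y₀ ≤ (J : ℝ) + a := by
      have := Int.lt_floor_add_one y₀
      push_cast [hJ]; linarith
    set u : ℝ := (((J : ℝ) + a) - y₀) / δ with hu
    have hu0 : 0 ≤ u := div_nonneg (by linarith) (by linarith)
    refine ⟨⌊u⌋₊ + 1, ?_⟩
    set m : ℕ := ⌊u⌋₊ + 1 with hm
    have h1 : (m : ℝ) * δ > ((J : ℝ) + a) - y₀ := by
      have h2 : u < ⌊u⌋₊ + 1 := Nat.lt_floor_add_one u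
      have h2' : u < (m : ℝ) := by push_cast [hm]; push_cast at h2; linarith
      calc (m : ℝ) * δ > u * δ := mul_lt_mul_of_pos_right h2' hpos
        _ = ((J : ℝ) + a) - y₀ := by rw [hu]; field_simp
    have h3 : ((m : ℝ) - 1) * δ ≤ ((J : ℝ) + a) - y₀ := by
      have h4 : (⌊u⌋₊ : ℝ) ≤ u := Nat.floor_le hu0
      have h5 : ((m : ℝ) - 1) = (⌊u⌋₊ : ℝ) := by push_cast [hm]; ring
      rw [h5]
      calc (⌊u⌋₊ : ℝ) * δ ≤ u * δ := mul_le_mul_of_nonneg_right h4 hpos.le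
        _ = ((J : ℝ) + a) - y₀ := by rw [hu]; field_simp
    set x : ℝ := y₀ + m * δ with hx
    have hx1 : (J : ℝ) + a < x := by nlinarith [h1]
    have hx2 : x < (J : ℝ) + b := by nlinarith [h3]
    have hfl : ⌊x⌋ = J := Int.floor_eq_iff.mpr ⟨by linarith, by linarith⟩
    have hfr : Int.fract x = x - (J : ℝ) := by rw [Int.fract, hfl]
    exact ⟨by rw [hfr]; linarith, by rw [hfr]; linarith⟩

/-- Density of the forward orbit of an irrational rotation. -/
lemma exists_fract_mem (α : ℝ) (hirr : Irrational α) (x₀ a b : ℝ)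
    (ha : 0 ≤ a) (hab : a < b) (hb : b ≤ 1) :
    ∃ k : ℕ, a < Int.fract (x₀ + k * α) ∧ Int.fract (x₀ + k * α) < b := by
  obtain ⟨n, hn⟩ := exists_nat_gt (1 / (b - a))
  have hba : 0 < b - a := by linarith
  have hn0 : 0 < n := by
    by_contra h
    push_neg at h
    interval_cases n
    · simp only [Nat.cast_zero] at hn
      have : (0:ℝ) < 1/(b-a) := by positivity
      linarith
  obtain ⟨j, k, hk0, hkn, hjk⟩ := Real.exists_int_int_abs_mul_sub_le α hn0
  set δ : ℝ := (k : ℝ) * α - j with hδdef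
  have hδ0 : δ ≠ 0 := by
    have : Irrational ((k : ℝ) * α) := hirr.intCast_mul (by exact_mod_cast hk0.ne')
    intro h
    exact (this.ne_int j) (by linarith [h])
  have hδsmall : |δ| < b - a := by
    have h1 : (1 : ℝ) / (n + 1) < b - a := by
      rw [div_lt_iff₀ (by positivity)]
      rw [div_lt_iff₀ hba] at hn
      nlinarith [hba]
    linarith [hjk]
  obtain ⟨m, hm1, hm2⟩ := walk_fract a b ha hb x₀ δ hδ0 hδsmall
  refine ⟨m * k.toNat, ?_, ?_⟩
  · have he : x₀ + (↑(m * k.toNat) : ℝ) * α = (x₀ + m * δ) + (m * j : ℤ) := by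
      have hk' : ((k.toNat : ℤ) : ℝ) = (k : ℝ) := by
        congr 1; exact Int.toNat_of_nonneg hk0.le
      push_cast [hδdef]
      push_cast at hk'
      rw [hk']; ring
    rw [he, Int.fract_add_intCast]; exact hm1
  · have he : x₀ + (↑(m * k.toNat) : ℝ) * α = (x₀ + m * δ) + (m * j : ℤ) := by
      have hk' : ((k.toNat : ℤ) : ℝ) = (k : ℝ) := by
        congr 1; exact Int.toNat_of_nonneg hk0.le
      push_cast [hδdef]
      push_cast at hk'
      rw [hk']; ring
    rw [he, Int.fract_add_intCast]; exact hm2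

section Comb
variable (s t : ℕ) (A B : ℕ → ℕ)
variable (hs : 2 ≤ s) (ht : 1 ≤ t)
variable (hA : ∀ n, A n = sInf {x : ℕ | ∀ i, i < n → x ≠ A i ∧ x ≠ B i})
variable (hB : ∀ n, B n = s * A n + t * n)

include hA

lemma S_nonempty (n : ℕ) : {x : ℕ | ∀ i, i < n → x ≠ A i ∧ x ≠ B i}.Nonempty := by
  refine ⟨(Finset.range n).sup (fun i => max (A i) (B i)) + 1, fun i hi => ?_⟩
  have h1 : max (A i) (B i) ≤ (Finset.range n).sup (fun i => max (A i) (B i)) :=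
    Finset.le_sup (f := fun i => max (A i) (B i)) (Finset.mem_range.mpr hi)
  constructor <;> omega

lemma A_mem (n : ℕ) : ∀ i, i < n → A n ≠ A i ∧ A n ≠ B i := by
  have := Nat.sInf_mem (S_nonempty A B hA n)
  rw [← hA n] at this
  exact this

lemma A_cover (n : ℕ) : ∀ y, y < A n → ∃ i, i < n ∧ (y = A i ∨ y = B i) := by
  intro y hy
  have h1 : y ∉ {x : ℕ | ∀ i, i < n → x ≠ A i ∧ x ≠ B i} :=
    Nat.notMem_of_lt_sInf (by rwa [← hA n])
  simp only [Set.mem_setOf_eq, not_forall] at h1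
  obtain ⟨i, hi, h2⟩ := h1
  refine ⟨i, hi, by tauto⟩

lemma A_zero : A 0 = 0 := by
  have h0 : (0:ℕ) ∈ {x : ℕ | ∀ i, i < 0 → x ≠ A i ∧ x ≠ B i} := fun i hi => absurd hi (Nat.not_lt_zero i)
  have := Nat.sInf_le h0
  rw [hA 0]
  omega

lemma A_strictMono : StrictMono A := by
  apply strictMono_nat_of_lt_succ
  intro n
  have hne : A (n+1) ≠ A n := (A_mem A B hA (n+1) n (Nat.lt_succ_self n)).1
  have hle : A n ≤ A (n+1) := by
    rw [hA n]
    apply Nat.sInf_le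
    intro i hi
    exact A_mem A B hA (n+1) i (hi.trans (Nat.lt_succ_self n))
  omega


lemma A_ge (n : ℕ) : n ≤ A n := by
  have := (A_strictMono A B hA).le_apply (x := n)
  exact this

include hB hs ht

lemma A_lt_B (j : ℕ) (hj : 1 ≤ j) : A j < B j := by
  have h1 : j ≤ A j := A_ge A B hA j
  have := hB j
  nlinarith

lemma AB_ne (i j : ℕ) (hj : 1 ≤ j) : A i ≠ B j := by
  rcases lt_or_ge j i with h | h
  · exact (A_mem A B hA i j h).2
  · have h1 : A i ≤ A j := (A_strictMono A B hA).monotone h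
    have h2 : A j < B j := A_lt_B s t A B hs ht hA hB j hj
    omega

lemma B_step (i : ℕ) : B i + 3 ≤ B (i + 1) := by
  have h1 : A i + 1 ≤ A (i+1) := A_strictMono A B hA (Nat.lt_succ_self i)
  have h2 := hB i
  have h3 := hB (i+1)
  nlinarith

lemma B_mono {i j : ℕ} (h : i < j) : B i + 3 ≤ B j := by
  induction j with
  | zero => omega
  | succ k ih =>
    rcases Nat.lt_succ_iff_lt_or_eq.mp h with h' | h'
    · have := B_step s t A B hs ht hA hB k
      have := ih h'
      omega
    · subst h'; exact B_step s t A B hs ht hA hB i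

lemma countC (n : ℕ) (hn : 1 ≤ n) :
    A n = n + ((Finset.Ico 1 n).filter (fun i => B i < A n)).card := by
  have hkey : Finset.range (A n) =
      (Finset.range n).image A ∪ ((Finset.Ico 1 n).filter (fun i => B i < A n)).image B := by
    ext y
    simp only [Finset.mem_range, Finset.mem_union, Finset.mem_image, Finset.mem_filter,
      Finset.mem_Ico]
    constructor
    · intro hy
      obtain ⟨i, hi, hcase⟩ := A_cover A B hA n y hy
      rcases hcase with h | h
      · exact Or.inl ⟨i, hi, h.symm⟩
      · rcases Nat.eq_zero_or_pos i with h0 | h0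
        · subst h0
          have hB0 : B 0 = s * A 0 + t * 0 := hB 0
          rw [A_zero A B hA] at hB0
          simp at hB0
          left
          exact ⟨0, hn, by rw [A_zero A B hA]; omega⟩
        · right
          exact ⟨i, ⟨⟨h0, hi⟩, by omega⟩, h.symm⟩
    · intro hy
      rcases hy with ⟨i, hi, h⟩ | ⟨i, ⟨_, hBi⟩, h⟩
      · rw [← h]; exact A_strictMono A B hA hi
      · omega
  have hAn : (Finset.range (A n)).card = A n := Finset.card_range _
  rw [hkey] at hAn
  have hdisj : Disjoint ((Finset.range n).image A)
      (((Finset.Ico 1 n).filter (fun i => B i < A n)).image B) := by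
    rw [Finset.disjoint_left]
    intro y hy1 hy2
    simp only [Finset.mem_image, Finset.mem_filter, Finset.mem_Ico] at hy1 hy2
    obtain ⟨i, _, hi⟩ := hy1
    obtain ⟨j, ⟨⟨hj1, _⟩, _⟩, hj⟩ := hy2
    exact AB_ne s t A B hs ht hA hB i j hj1 (by omega)
  rw [Finset.card_union_of_disjoint hdisj] at hAn
  rw [Finset.card_image_of_injective _ (A_strictMono A B hA).injective] at hAn
  have hBinj : Set.InjOn B ((Finset.Ico 1 n).filter (fun i => B i < A n)) := by
    intro i hi j hj hij
    by_contra hne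
    rcases Nat.lt_or_ge i j with h | h
    · have := B_mono s t A B hs ht hA hB h; omega
    · have : j < i := by omega
      have := B_mono s t A B hs ht hA hB this; omega
  rw [Finset.card_image_of_injOn hBinj] at hAn
  rw [Finset.card_range] at hAn
  exact hAn.symm

lemma gap_le_two (n : ℕ) : A (n + 1) ≤ A n + 2 := by
  by_contra hcon
  push_neg at hcon
  have h1 : A n + 1 < A (n+1) := by omega
  have h2 : A n + 2 < A (n+1) := by omega
  have hle : ∀ i, i < n + 1 → A i ≤ A n := fun i hi =>
    (A_strictMono A B hA).monotone (by omega)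
  obtain ⟨i, hi, hci⟩ := A_cover A B hA (n+1) (A n + 1) h1
  obtain ⟨j, hj, hcj⟩ := A_cover A B hA (n+1) (A n + 2) h2
  have hBi : B i = A n + 1 := by
    rcases hci with h | h
    · have := hle i hi; omega
    · omega
  have hBj : B j = A n + 2 := by
    rcases hcj with h | h
    · have := hle j hj; omega
    · omega
  have hij : i ≠ j := by intro h; rw [h] at hBi; omega
  rcases Nat.lt_or_ge i j with h | h
  · have := B_mono s t A B hs ht hA hB h; omega
  · have : j < i := by omega
    have := B_mono s t A B hs ht hA hB this; omega

lemma P3 (n : ℕ) (hgap : A (n + 1) = A n + 2) :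
    ∃ j : ℕ, j + n = A n + 1 ∧ s * A j + t * j = A n + 1 := by
  have h1 : A n + 1 < A (n+1) := by omega
  have hle : ∀ i, i < n + 1 → A i ≤ A n := fun i hi =>
    (A_strictMono A B hA).monotone (by omega)
  obtain ⟨jv, hjv, hcv⟩ := A_cover A B hA (n+1) (A n + 1) h1
  have hBjv : B jv = A n + 1 := by
    rcases hcv with h | h
    · have := hle jv hjv; omega
    · omega
  have hjv1 : 1 ≤ jv := by
    by_contra h
    push_neg at h
    interval_cases jv
    have hB0 : B 0 = s * A 0 + t * 0 := hB 0
    rw [A_zero A B hA] at hB0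
    omega
  -- Lemma C at n+1
  have hC := countC s t A B hs ht hA hB (n+1) (by omega)
  have hfilter : (Finset.Ico 1 (n+1)).filter (fun i => B i < A (n+1)) = Finset.Ico 1 (jv + 1) := by
    ext i
    simp only [Finset.mem_filter, Finset.mem_Ico]
    constructor
    · rintro ⟨⟨hi1, hi2⟩, hiB⟩
      refine ⟨hi1, ?_⟩
      by_contra hcon
      push_neg at hcon
      have : jv < i := by omega
      have := B_mono s t A B hs ht hA hB this
      omega
    · rintro ⟨hi1, hi2⟩
      have hle2 : B i ≤ B jv := by
        rcases Nat.lt_or_ge i jv with h | h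
        · have := B_mono s t A B hs ht hA hB h; omega
        · have : i = jv := by omega
          rw [this]
      refine ⟨⟨hi1, by omega⟩, by omega⟩
  rw [hfilter] at hC
  rw [Nat.card_Ico] at hC
  refine ⟨jv, by omega, by rw [← hB jv]; omega⟩

end Comb

/-- For `s ≥ 2`, `t ≥ 1`, there are no reals `α`, `γ` with
`A n = ⌊n * α + γ⌋` for all `n ≥ 0`. -/
theorem stmt_11 (s t : ℕ) (hs : 2 ≤ s) (ht : 1 ≤ t) (A B : ℕ → ℕ)
    (hA : ∀ n, A n = sInf {x : ℕ | ∀ i, i < n → x ≠ A i ∧ x ≠ B i})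
    (hB : ∀ n, B n = s * A n + t * n) :
    ¬ ∃ α γ : ℝ, ∀ n : ℕ, (A n : ℤ) = ⌊(n : ℝ) * α + γ⌋ := by
  rintro ⟨α, γ, hfl⟩
  -- basic floor bounds
  have flo : ∀ n : ℕ, (A n : ℝ) ≤ n * α + γ := by
    intro n
    have h1 : ((⌊(n : ℝ) * α + γ⌋ : ℤ) : ℝ) ≤ (n : ℝ) * α + γ := Int.floor_le _
    rw [← hfl n] at h1
    exact_mod_cast h1
  have fhi : ∀ n : ℕ, (n : ℝ) * α + γ < (A n : ℝ) + 1 := by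
    intro n
    have h1 : (n : ℝ) * α + γ < ((⌊(n : ℝ) * α + γ⌋ : ℤ) : ℝ) + 1 := Int.lt_floor_add_one _
    rw [← hfl n] at h1
    exact_mod_cast h1
  have hA0 : A 0 = 0 := A_zero A B hA
  have hγ0 : 0 ≤ γ := by have := flo 0; rw [hA0] at this; push_cast at this; linarith
  have hγ1 : γ < 1 := by have := fhi 0; rw [hA0] at this; push_cast at this; linarith
  have hAgen : ∀ n : ℕ, (n : ℝ) ≤ (A n : ℝ) := by
    intro n; exact_mod_cast A_ge A B hA n
  -- α ≥ 1
  have hα_ge1 : 1 ≤ α := by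
    by_contra hcon
    push_neg at hcon
    obtain ⟨n, hn⟩ := exists_nat_gt (γ / (1 - α))
    have h1 := flo n
    have h2 := hAgen n
    have h3 : (n : ℝ) * (1 - α) ≤ γ := by nlinarith
    have h4 : γ / (1 - α) * (1 - α) = γ := div_mul_cancel₀ γ (by linarith : (1:ℝ) - α ≠ 0)
    nlinarith
  have hsα : (2:ℝ) ≤ (s:ℝ) * α + t := by
    have h1 : (2:ℝ) ≤ (s:ℝ) := by exact_mod_cast hs
    have h2 : (1:ℝ) ≤ (t:ℝ) := by exact_mod_cast ht
    nlinarith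
  have hden : (0:ℝ) < (s:ℝ) * α + t := by linarith
  -- counting bounds
  have KU : ∀ n : ℕ, 1 ≤ n → ((A n : ℝ) - n) * ((s:ℝ) * α + t) ≤ n * α + 1 + s := by
    intro n hn
    have hC := countC s t A B hs ht hA hB n hn
    set F := (Finset.Ico 1 n).filter (fun i => B i < A n) with hF
    set U : ℝ := ((n:ℝ) * α + 1 + s) / ((s:ℝ) * α + t) with hU
    have hU0 : 0 ≤ U := by
      apply div_nonneg _ hden.le
      have : (0:ℝ) ≤ (n:ℝ) * α := by positivity
      positivity
    have hsub : F ⊆ Finset.Icc 1 ⌊U⌋₊ := by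
      intro i hi
      rw [hF, Finset.mem_filter, Finset.mem_Ico] at hi
      obtain ⟨⟨hi1, hi2⟩, hiB⟩ := hi
      have hBi : ((B i : ℝ)) = (s:ℝ) * A i + t * i := by
        rw [hB i]; push_cast; ring
      have hAi : (i:ℝ) * α + γ - 1 < (A i : ℝ) := by linarith [fhi i]
      have hsp : (0:ℝ) < (s:ℝ) := by exact_mod_cast (by omega : 0 < s)
      have hstep : (s:ℝ) * ((i:ℝ) * α + γ - 1) < (s:ℝ) * (A i : ℝ) :=
        mul_lt_mul_of_pos_left hAi hsp
      have h1 : ((s:ℝ) * α + t) * i - s < (B i : ℝ) := by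
        nlinarith [mul_nonneg hsp.le hγ0]
      have h2 : (B i : ℝ) < (A n : ℝ) := by exact_mod_cast hiB
      have h3 : (A n : ℝ) ≤ n * α + 1 := by linarith [flo n]
      have h4 : (i : ℝ) ≤ U := by
        rw [hU, le_div_iff₀ hden]; nlinarith
      rw [Finset.mem_Icc]
      exact ⟨hi1, Nat.le_floor h4⟩
    have hcard : F.card ≤ ⌊U⌋₊ := by
      calc F.card ≤ (Finset.Icc 1 ⌊U⌋₊).card := Finset.card_le_card hsub
        _ = ⌊U⌋₊ := by rw [Nat.card_Icc]; omega
    have h5 : ((A n : ℝ) - n) ≤ U := by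
      have h6 : (F.card : ℝ) ≤ (⌊U⌋₊ : ℝ) := by exact_mod_cast hcard
      have h7 : ((⌊U⌋₊ : ℝ)) ≤ U := Nat.floor_le hU0
      have h8 : (A n : ℝ) = n + F.card := by exact_mod_cast hC
      linarith
    rw [hU] at h5
    calc ((A n : ℝ) - n) * ((s:ℝ) * α + t)
        ≤ (((n:ℝ) * α + 1 + s) / ((s:ℝ) * α + t)) * ((s:ℝ) * α + t) := by
          apply mul_le_mul_of_nonneg_right h5 hden.le
      _ = (n:ℝ) * α + 1 + s := by field_simp
  have KL : ∀ n : ℕ, 1 ≤ n → (n:ℝ) * α - 1 - s ≤ ((A n : ℝ) - n + 1) * ((s:ℝ) * α + t) := by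
    intro n hn
    have hC := countC s t A B hs ht hA hB n hn
    set F := (Finset.Ico 1 n).filter (fun i => B i < A n) with hF
    set L : ℝ := ((n:ℝ) * α - 1 - s) / ((s:ℝ) * α + t) with hL
    have hcardF : (A n : ℝ) = n + F.card := by exact_mod_cast hC
    rcases le_or_gt L 1 with hLsmall | hLbig
    · -- trivial case
      have h1 : (0:ℝ) ≤ (F.card : ℝ) := Nat.cast_nonneg _
      have h2 : L * ((s:ℝ) * α + t) = (n:ℝ) * α - 1 - s := by rw [hL]; field_simp
      nlinarith
    · have hL0 : 0 ≤ L := by linarith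
      have hsub : Finset.Icc 1 ⌊L⌋₊ ⊆ F := by
        intro i hi
        rw [Finset.mem_Icc] at hi
        obtain ⟨hi1, hi2⟩ := hi
        have hiL : (i : ℝ) ≤ L := le_trans (by exact_mod_cast hi2) (Nat.floor_le hL0)
        have h8 : L * ((s:ℝ) * α + t) = (n:ℝ) * α - 1 - s := by rw [hL]; field_simp
        have hiL2 : (i : ℝ) * ((s:ℝ) * α + t) ≤ (n:ℝ) * α - 1 - s := by
          nlinarith [mul_le_mul_of_nonneg_right hiL hden.le]
        have hBi : ((B i : ℝ)) = (s:ℝ) * A i + t * i := by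
          rw [hB i]; push_cast; ring
        have hAi : (A i : ℝ) ≤ i * α + γ := flo i
        have hsp : (0:ℝ) < (s:ℝ) := by exact_mod_cast (by omega : 0 < s)
        have hstep : (s:ℝ) * (A i : ℝ) ≤ (s:ℝ) * ((i:ℝ) * α + γ) :=
          mul_le_mul_of_nonneg_left hAi hsp.le
        have hBiup : (B i : ℝ) ≤ ((s:ℝ) * α + t) * i + s := by nlinarith [hγ1, hsp]
        have hAn : (n:ℝ) * α - 1 < (A n : ℝ) := by linarith [fhi n]
        have hBlt : (B i : ℝ) < (A n : ℝ) := by linarith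
        have hiltn : i < n := by
          by_contra hcon
          push_neg at hcon
          have h1 : (n : ℝ) ≤ (i : ℝ) := by exact_mod_cast hcon
          have h2 : (i:ℝ) * ((s:ℝ)*α + t) ≥ (n:ℝ) * ((s:ℝ)*α+t) :=
            mul_le_mul_of_nonneg_right h1 hden.le
          have hss1 : (1:ℝ) ≤ (s:ℝ) := by exact_mod_cast (by omega : 1 ≤ s)
          have htt1 : (1:ℝ) ≤ (t:ℝ) := by exact_mod_cast ht
          have hx : (0:ℝ) ≤ (n:ℝ) * (((s:ℝ)-1)*α + t) :=
            mul_nonneg (by positivity) (by nlinarith)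
          nlinarith [hx, h2, hiL2]
        rw [hF, Finset.mem_filter, Finset.mem_Ico]
        exact ⟨⟨hi1, hiltn⟩, by exact_mod_cast hBlt⟩
      have hcard : ⌊L⌋₊ ≤ F.card := by
        calc ⌊L⌋₊ = (Finset.Icc 1 ⌊L⌋₊).card := by rw [Nat.card_Icc]; omega
          _ ≤ F.card := Finset.card_le_card hsub
      have h6 : L - 1 < (⌊L⌋₊ : ℝ) := Nat.sub_one_lt_floor L
      have h7 : (⌊L⌋₊ : ℝ) ≤ (F.card : ℝ) := by exact_mod_cast hcard
      have h8 : L * ((s:ℝ) * α + t) = (n:ℝ) * α - 1 - s := by rw [hL]; field_simp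
      nlinarith
  -- the quadratic equation
  have hquad : (α - 1) * ((s:ℝ) * α + t) = α := by
    set c : ℝ := (α - 1) * ((s:ℝ) * α + t) - α with hc
    have hub : ∀ n : ℕ, 1 ≤ n → (n:ℝ) * c ≤ 1 + s + ((s:ℝ)*α + t) := by
      intro n hn
      have h1 := KU n hn
      have h2 : (n:ℝ) * (α - 1) - 1 ≤ (A n : ℝ) - n := by
        have := fhi n; have := hAgen n; nlinarith [flo n]
      -- (A n - n) ≥ n(α-1) - 1 (γ ≥ 0): A n > nα + γ - 1 ≥ nα - 1
      have h3 : ((n:ℝ) * (α - 1) - 1) * ((s:ℝ)*α + t) ≤ (n:ℝ) * α + 1 + s := by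
        calc ((n:ℝ) * (α - 1) - 1) * ((s:ℝ)*α + t) ≤ ((A n : ℝ) - n) * ((s:ℝ)*α + t) := by
              apply mul_le_mul_of_nonneg_right h2 hden.le
          _ ≤ (n:ℝ) * α + 1 + s := h1
      nlinarith
    have hlb : ∀ n : ℕ, 1 ≤ n → -(1 + s + 2*((s:ℝ)*α + t)) ≤ (n:ℝ) * c := by
      intro n hn
      have h1 := KL n hn
      have h2 : (A n : ℝ) - n ≤ (n:ℝ) * (α - 1) + 1 := by
        have := flo n; nlinarith
      have h3 : (n:ℝ)*α - 1 - s ≤ ((n:ℝ) * (α-1) + 2) * ((s:ℝ)*α + t) := by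
        calc (n:ℝ)*α - 1 - s ≤ ((A n : ℝ) - n + 1) * ((s:ℝ)*α + t) := h1
          _ ≤ ((n:ℝ) * (α-1) + 2) * ((s:ℝ)*α + t) := by
              apply mul_le_mul_of_nonneg_right (by linarith) hden.le
      nlinarith
    have hc0 : c = 0 := by
      by_contra hne
      rcases lt_trichotomy c 0 with hneg | hzero | hpos
      case inr.inl => exact hne hzero
      · obtain ⟨n, hn⟩ := exists_nat_gt ((1 + s + 2*((s:ℝ)*α + t)) / (-c))
        have hn1 : 1 ≤ n := by
          by_contra hcon
          push_neg at hcon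
          interval_cases n
          · simp only [Nat.cast_zero] at hn
            have hsnn : (0:ℝ) ≤ (s:ℝ) := by positivity
            have : (0:ℝ) < (1 + s + 2*((s:ℝ)*α + t)) / (-c) :=
              div_pos (by linarith [hden]) (by linarith)
            linarith
        have := hlb n hn1
        have h4 : ((1 + s + 2*((s:ℝ)*α + t)) / (-c)) * (-c) = 1 + s + 2*((s:ℝ)*α + t) := by
          field_simp
        nlinarith
      · obtain ⟨n, hn⟩ := exists_nat_gt ((1 + s + ((s:ℝ)*α + t)) / c)
        have hn1 : 1 ≤ n := by
          by_contra hcon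
          push_neg at hcon
          interval_cases n
          · simp only [Nat.cast_zero] at hn
            have hsnn : (0:ℝ) ≤ (s:ℝ) := by positivity
            have : (0:ℝ) < (1 + s + ((s:ℝ)*α + t)) / c :=
              div_pos (by linarith [hden]) (by linarith)
            linarith
        have := hub n hn1
        have h4 : ((1 + s + ((s:ℝ)*α + t)) / c) * c = 1 + s + ((s:ℝ)*α + t) := by field_simp
        nlinarith
    rw [hc] at hc0; linarith
  -- strict bounds on α
  have hα_gt1 : 1 < α := by
    have hfac : (α - 1) * ((s:ℝ) * α + t - 1) = 1 := by nlinarith [hquad]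
    by_contra hcon
    push_neg at hcon
    have h1 : (s:ℝ) * α + t - 1 ≥ 1 := by linarith [hsα]
    nlinarith
  have hα_lt : (s:ℝ) * α < s + 1 := by
    by_contra hcon
    push_neg at hcon
    have hss : (2:ℝ) ≤ (s:ℝ) := by exact_mod_cast hs
    have htt : (1:ℝ) ≤ (t:ℝ) := by exact_mod_cast ht
    nlinarith [hquad]
  have hα_lt2 : α < 2 := by
    have hss : (2:ℝ) ≤ (s:ℝ) := by exact_mod_cast hs
    nlinarith
  -- irrationality of α
  have hirr : Irrational α := by
    rw [Irrational]
    intro hmem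
    obtain ⟨q, hq⟩ := hmem
    have hq1 : (1:ℚ) < q := by
      have : (1:ℝ) < (q:ℝ) := by rw [hq]; exact hα_gt1
      exact_mod_cast this
    have hqlt : (s:ℚ) * q < s + 1 := by
      have : ((s:ℚ) * q : ℚ) < ((s:ℚ) + 1 : ℚ) ↔ (s:ℝ) * q < (s:ℝ) + 1 := by
        constructor <;> intro h <;> exact_mod_cast h
      rw [this, hq]
      exact_mod_cast hα_lt
    have hqe : (q - 1) * ((s:ℚ) * q + t) - q = 0 := by
      have h1 : (((q - 1) * ((s:ℚ) * q + t) - q : ℚ) : ℝ) = 0 := by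
        push_cast
        rw [hq]
        linarith [hquad]
      exact_mod_cast h1
    set p : ℤ := q.num with hp
    set d : ℤ := (q.den : ℤ) with hd
    have hd0 : 0 < d := by rw [hd]; exact_mod_cast q.pos
    have hdq : ((q.den : ℚ)) ≠ 0 := by
      have := q.pos; positivity
    have hpd : (p : ℚ) = q * d := by
      rw [hp, hd]
      have h := (eq_div_iff hdq).mp (Rat.num_div_den q).symm
      push_cast
      linarith [h]
    have hZ : (s:ℤ) * p^2 + ((t:ℤ) - s - 1) * p * d - t * d^2 = 0 := by
      have h1 : (((s:ℤ) * p^2 + ((t:ℤ) - s - 1) * p * d - t * d^2 : ℤ) : ℚ)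
          = ((q - 1) * ((s:ℚ) * q + t) - q) * d^2 := by
        push_cast
        rw [hpd]
        push_cast
        ring
      rw [hqe] at h1
      simp at h1
      exact_mod_cast h1
    have hdvd : d ∣ (s:ℤ) * p^2 := ⟨(t:ℤ) * d - ((t:ℤ) - s - 1) * p, by linarith [hZ]⟩
    have hcop : IsCoprime d p := by
      rw [Int.isCoprime_iff_gcd_eq_one]
      have := q.reduced
      rw [hp, hd]
      simpa [Int.gcd, Nat.coprime_comm] using this.symm
    have hcop2 : IsCoprime d (p^2) := hcop.pow_right
    have hds : d ∣ (s:ℤ) := hcop2.dvd_of_dvd_mul_right hdvd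
    have hs0 : (0:ℤ) < (s:ℤ) := by exact_mod_cast (by omega : 0 < s)
    have hdle : d ≤ (s:ℤ) := Int.le_of_dvd hs0 hds
    have hpd2 : d < p := by
      have h1 : (d : ℚ) < (p : ℚ) := by
        rw [hpd]
        nlinarith [hd0, hq1, (by exact_mod_cast hd0 : (0:ℚ) < (d:ℚ))]
      exact_mod_cast h1
    have hsp : (s:ℤ) * p < ((s:ℤ) + 1) * d := by
      have h1 : (s:ℚ) * p < ((s:ℚ) + 1) * d := by
        rw [hpd]
        have hdq : (0:ℚ) < (d:ℚ) := by exact_mod_cast hd0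
        nlinarith [hqlt]
      exact_mod_cast h1
    have hs2 : (2:ℤ) ≤ (s:ℤ) := by exact_mod_cast hs
    have h1 : (s:ℤ) * (d+1) ≤ (s:ℤ) * p := by
      apply mul_le_mul_of_nonneg_left (by omega) (by omega)
    nlinarith [h1]
  -- density application
  have hss : (0:ℝ) < (s:ℝ) := by exact_mod_cast (by omega : 0 < s)
  have ha0 : (0:ℝ) ≤ (2 - α)/s := div_nonneg (by linarith) hss.le
  have hab : (2 - α)/s < 1/s := by
    rw [div_lt_div_iff₀ hss hss]
    nlinarith [mul_lt_mul_of_pos_right (show (2-α) < (1:ℝ) by linarith) hss]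
  have hb1 : (1:ℝ)/s ≤ 1 := by
    rw [div_le_one hss]
    exact_mod_cast (show 1 ≤ s by omega)
  obtain ⟨k, hk1, hk2⟩ := exists_fract_mem α hirr ((α + γ)/s) ((2 - α)/s) (1/s) ha0 hab hb1
  set y : ℝ := (α + γ)/s + k * α with hy
  set n : ℕ := 1 + s * k with hn
  have hzy : (n:ℝ) * α + γ = s * y := by
    rw [hy, hn]; push_cast; field_simp; ring
  set M : ℤ := ⌊y⌋ with hM
  have hfr : Int.fract y = y - M := rfl
  have hsf1 : 2 - α < s * Int.fract y := by
    have := hk1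
    calc 2 - α = ((2 - α)/s) * s := by field_simp
      _ < Int.fract y * s := by apply mul_lt_mul_of_pos_right this hss
      _ = s * Int.fract y := by ring
  have hsf2 : s * Int.fract y < 1 := by
    have := hk2
    calc (s:ℝ) * Int.fract y = Int.fract y * s := by ring
      _ < (1/s) * s := by apply mul_lt_mul_of_pos_right this hss
      _ = 1 := by field_simp
  have hsf0 : 0 < s * Int.fract y := by linarith
  have hAnZ : (A n : ℤ) = s * M := by
    rw [hfl n]
    apply Int.floor_eq_iff.mpr
    constructor
    · push_cast
      rw [hzy]
      have : (s:ℝ) * y = s * M + s * Int.fract y := by rw [hfr]; ring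
      rw [this]; linarith
    · push_cast
      rw [hzy]
      have : (s:ℝ) * y = s * M + s * Int.fract y := by rw [hfr]; ring
      rw [this]; linarith
  have hAn1Z : (s * M + 2 : ℤ) ≤ (A (n+1) : ℤ) := by
    rw [hfl (n+1)]
    apply Int.le_floor.mpr
    have h1 : ((n+1:ℕ) : ℝ) * α + γ = (n:ℝ) * α + γ + α := by push_cast; ring
    rw [h1, hzy]
    have h2 : (s:ℝ) * y = s * M + s * Int.fract y := by rw [hfr]; ring
    rw [h2]; push_cast; linarith
  have hgap : A (n + 1) = A n + 2 := by
    have hle := gap_le_two s t A B hs ht hA hB n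
    have h1 : (A n : ℤ) + 2 ≤ (A (n+1) : ℤ) := by rw [hAnZ]; exact hAn1Z
    have h2 : A n + 2 ≤ A (n+1) := by exact_mod_cast h1
    omega
  have hM0 : 0 ≤ M := by
    by_contra hcon
    push_neg at hcon
    have h1 : (s:ℤ) * M ≤ -(s:ℤ) := by nlinarith [(by exact_mod_cast hs : (2:ℤ) ≤ (s:ℤ))]
    have h2 : (0:ℤ) ≤ (A n : ℤ) := by positivity
    have h3 : (2:ℤ) ≤ (s:ℤ) := by exact_mod_cast hs
    omega
  set M' : ℕ := M.toNat with hM'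
  have hAnN : A n = s * M' := by
    have h1 : (A n : ℤ) = (s:ℤ) * (M' : ℤ) := by
      rw [hAnZ, hM', Int.toNat_of_nonneg hM0]
    exact_mod_cast h1
  obtain ⟨j, hj1, hj2⟩ := P3 s t A B hs ht hA hB n hgap
  -- j + n = A n + 1 and s * A j + t * j = A n + 1
  rw [hAnN] at hj1 hj2
  rw [hn] at hj1
  -- j + (1 + s*k) = s*M' + 1  ⇒  j = s*(M' - k)
  have hkM : k ≤ M' := by
    have hsk : s * k ≤ s * M' := by omega
    exact Nat.le_of_mul_le_mul_left hsk (by omega)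
  obtain ⟨e, he⟩ : ∃ e, M' = k + e := ⟨M' - k, by omega⟩
  have hje : j = s * e := by
    rw [he] at hj1
    have : s * (k + e) = s * k + s * e := by ring
    omega
  have hfin : s * (A j + t * e) = s * M' + 1 := by
    calc s * (A j + t * e) = s * A j + s * (t * e) := by ring
      _ = s * A j + t * j := by rw [hje]; ring
      _ = s * M' + 1 := hj2
  have hdvd1 : s ∣ s * M' + 1 := ⟨A j + t * e, hfin.symm⟩
  have hdvd2 : s ∣ s * M' := ⟨M', rfl⟩
  have hdvd3 : s ∣ 1 := by
    have := Nat.dvd_sub hdvd1 hdvd2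
    simpa using this
  have := Nat.le_of_dvd one_pos hdvd3
  omega
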